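/- Let λ₁, λ₂ ∈ C, α ∈ R, Γ > 1, and define u(z) = z/√(|z|² + Γ) and F(z) = Re{λ₁ log(1 − u(z)e^{iα}) − λ₁ log(1 − u(z)) + λ₂ log(1 − u(z))}. Then there is an absolute constant C > 0 such that whenever x² + y² = r² ≤ Γ/2: |F(x+iy) + Re{(λ₁(e^{iα} − 1) + λ₂)(x+iy)} Γ^{−1/2}| ≤ C(|λ₁(e^{iα}−1)| + |λ₂|) r² / Γ. -/

import Mathlib

open Complex in
lemma log_one_sub_lip {ρ : ℝ} (hρ : ρ < 1) {a b : ℂ} (ha : ‖a‖ ≤ ρ)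
    (hb : ‖b‖ ≤ ρ) :
    ‖(Complex.log (1 - a) + a) - (Complex.log (1 - b) + b)‖
      ≤ ρ / (1 - ρ) * ‖a - b‖ := by
  have hρ0 : 0 ≤ ρ := le_trans (norm_nonneg a) ha
  set s : Set ℂ := Metric.closedBall 0 ρ
  have key : ∀ w ∈ s, HasFDerivWithinAt (fun w => Complex.log (1 - w) + w)
      (ContinuousLinearMap.smulRight (1 : ℂ →L[ℂ] ℂ) (1 - (1 - w)⁻¹)) s w := by
    intro w hw
    have hw' : ‖w‖ ≤ ρ := by simpa [s, Complex.dist_eq] using hw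
    have hmem : (1 - w) ∈ Complex.slitPlane := by
      apply Complex.mem_slitPlane_iff.2
      left
      have : w.re ≤ ‖w‖ := Complex.re_le_norm w
      simp only [Complex.sub_re, Complex.one_re]
      linarith
    have h1 : HasDerivAt (fun w : ℂ => Complex.log (1 - w)) (-(1 - w)⁻¹) w := by
      have := (Complex.hasDerivAt_log hmem).comp w ((hasDerivAt_id w).const_sub 1)
      simpa [Function.comp_def] using this
    have h2 : HasDerivAt (fun w : ℂ => Complex.log (1 - w) + w) (1 - (1 - w)⁻¹) w := by
      have := h1.add (hasDerivAt_id w)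
      rw [show (1:ℂ) - (1 - w)⁻¹ = -(1 - w)⁻¹ + 1 by ring]
      exact this
    exact h2.hasFDerivAt.hasFDerivWithinAt
  have bound : ∀ w ∈ s, ‖ContinuousLinearMap.smulRight (1 : ℂ →L[ℂ] ℂ) (1 - (1 - w)⁻¹)‖
      ≤ ρ / (1 - ρ) := by
    intro w hw
    have hw' : ‖w‖ ≤ ρ := by simpa [s, Complex.dist_eq] using hw
    rw [ContinuousLinearMap.norm_smulRight_apply]
    rw [norm_one]
    have hne : (1 : ℂ) - w ≠ 0 := by
      intro h
      have : ‖1 - w‖ = 0 := by rw [h]; simp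
      have h1 : (1 : ℝ) - ‖w‖ ≤ ‖1 - w‖ := by
        have := norm_sub_norm_le (1:ℂ) w
        simpa using this
      linarith
    have hval : (1 : ℂ) - (1 - w)⁻¹ = -w / (1 - w) := by
      field_simp
      ring
    rw [one_mul, hval]
    have hd : (1 : ℝ) - ρ ≤ ‖1 - w‖ := by
      have := norm_sub_norm_le (1:ℂ) w
      simp only [norm_one] at this
      linarith
    rw [show ‖-w / (1 - w)‖ = ‖w‖ / ‖1 - w‖ by
      simp [map_div₀]]
    exact div_le_div₀ hρ0 hw' (by linarith) hd
  have conv : Convex ℝ s := convex_closedBall 0 ρ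
  have has : a ∈ s := by simpa [s, Complex.dist_eq] using ha
  have hbs : b ∈ s := by simpa [s, Complex.dist_eq] using hb
  have := conv.norm_image_sub_le_of_norm_hasFDerivWithin_le key bound hbs has
  simpa using this

lemma arithA {ρ r Γ : ℝ} (hΓ : 1 < Γ) (hrΓ : r^2 ≤ Γ/2) (hρ2 : ρ^2*(r^2+Γ) = r^2) :
    ρ^2 ≤ 1/2 := by nlinarith [sq_nonneg r, sq_nonneg ρ]

lemma arithB {ρ : ℝ} (h0 : 0 ≤ ρ) (h : ρ^2 ≤ 1/2) : ρ ≤ 3/4 := by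
  nlinarith [sq_nonneg (ρ - 3/4)]

lemma arithC {ρ : ℝ} (h0 : 0 ≤ ρ) (h34 : ρ ≤ 3/4) : ρ/(1-ρ) ≤ 4*ρ := by
  rw [div_le_iff₀ (by linarith)]
  nlinarith [mul_nonneg h0 (by linarith : (0:ℝ) ≤ 3 - 4*ρ)]

lemma arithD {ρ r Γ : ℝ} (hΓ0 : 0 < Γ) (hρ2 : ρ^2*(r^2+Γ) = r^2) : ρ^2 ≤ r^2/Γ := by
  rw [le_div_iff₀ hΓ0]
  nlinarith [mul_nonneg (sq_nonneg ρ) (sq_nonneg r)]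

lemma arithE {R g s r Γ : ℝ} (hR0 : 0 ≤ R) (hRg : R ≤ g) (hgs : g ≤ s)
    (hg0 : 0 < g) (hs0 : 0 < s) (hg2 : g^2 = Γ) :
    R * (r^2/(s+g)/(g*s)) ≤ r^2/(2*Γ) := by
  subst hg2
  rw [div_div, ← mul_div_assoc, div_le_div_iff₀ (by positivity) (by positivity)]
  nlinarith [mul_nonneg (mul_nonneg (sq_nonneg r) hg0.le)
      (mul_nonneg (sub_nonneg.2 hgs) (by linarith : (0:ℝ) ≤ s + 2*g)),
    mul_nonneg (mul_nonneg (sq_nonneg r) (sq_nonneg g)) (sub_nonneg.2 hRg)]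

lemma arithF {A B r Γ : ℝ} (hA0 : 0 ≤ A) (hB0 : 0 ≤ B) (hΓ0 : 0 < Γ) :
    4*A*(r^2/Γ) + 4*B*(r^2/Γ) + (A+B)*(r^2/(2*Γ)) ≤ 10*(A+B)*r^2/Γ := by
  have ht : 0 ≤ r^2/Γ := by positivity
  have hsplit : (A + B) * (r ^ 2 / (2 * Γ)) = (A + B) / 2 * (r ^ 2 / Γ) := by
    field_simp
  rw [hsplit, mul_div_assoc]
  nlinarith [mul_nonneg hA0 ht, mul_nonneg hB0 ht]

/-- `u(z) = z / √(|z|² + Γ)`. -/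
noncomputable def uMap (Γ : ℝ) (z : ℂ) : ℂ := z / ((Real.sqrt (‖z‖ ^ 2 + Γ) : ℝ) : ℂ)

/-- `F(z) = Re(λ₁ log(1 − u(z)e^{iα}) − λ₁ log(1 − u(z)) + λ₂ log(1 − u(z)))`. -/
noncomputable def Fcal (lam1 lam2 : ℂ) (α Γ : ℝ) (z : ℂ) : ℝ :=
  (lam1 * Complex.log (1 - uMap Γ z * Complex.exp ((α : ℂ) * Complex.I))
    - lam1 * Complex.log (1 - uMap Γ z)
    + lam2 * Complex.log (1 - uMap Γ z)).re

/-- First-order Taylor expansion of `F` at `0` with quadratic error: there is an absolute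
constant `C > 0` such that whenever `x² + y² = r² ≤ Γ/2`,
`|F(x+iy) + Re((λ₁(e^{iα} − 1) + λ₂)(x+iy)) Γ^{-1/2}| ≤ C(|λ₁(e^{iα}−1)| + |λ₂|) r² / Γ`. -/
theorem calculus_zeroth_order :
    ∃ C : ℝ, 0 < C ∧
      ∀ (lam1 lam2 : ℂ) (α Γ : ℝ), 1 < Γ →
      ∀ x y r : ℝ, x ^ 2 + y ^ 2 = r ^ 2 → r ^ 2 ≤ Γ / 2 →
      |Fcal lam1 lam2 α Γ ((x : ℂ) + (y : ℂ) * Complex.I)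
          + ((lam1 * (Complex.exp ((α : ℂ) * Complex.I) - 1) + lam2)
              * ((x : ℂ) + (y : ℂ) * Complex.I)).re * (Real.sqrt Γ)⁻¹|
        ≤ C * (‖lam1 * (Complex.exp ((α : ℂ) * Complex.I) - 1)‖ + ‖lam2‖)
            * r ^ 2 / Γ := by
  refine ⟨10, by norm_num, ?_⟩
  intro lam1 lam2 α Γ hΓ x y r hxyr hrΓ
  set z : ℂ := (x : ℂ) + (y : ℂ) * Complex.I with hzdef
  have hΓ0 : (0:ℝ) < Γ := by linarith
  have habs2 : ‖z‖ ^ 2 = r ^ 2 := by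
    rw [hzdef, Complex.sq_norm, Complex.normSq_add_mul_I, hxyr]
  set s : ℝ := Real.sqrt (r ^ 2 + Γ) with hsdef
  set g : ℝ := Real.sqrt Γ with hgdef
  have hs2 : s ^ 2 = r ^ 2 + Γ := Real.sq_sqrt (by positivity)
  have hg2 : g ^ 2 = Γ := Real.sq_sqrt hΓ0.le
  have hg1 : 1 < g := by
    rw [hgdef, show (1:ℝ) = Real.sqrt 1 by simp]
    exact Real.sqrt_lt_sqrt (by norm_num) hΓ
  have hgs : g ≤ s := Real.sqrt_le_sqrt (by linarith [sq_nonneg r])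
  have hs0 : (0:ℝ) < s := lt_of_lt_of_le (by linarith) hgs
  have hg0 : (0:ℝ) < g := by linarith
  have hu : uMap Γ z = z / (s : ℂ) := by rw [uMap, habs2]
  set u : ℂ := z / (s : ℂ) with hudef
  set R : ℝ := Real.sqrt (r ^ 2) with hRdef
  have hR2 : R ^ 2 = r ^ 2 := Real.sq_sqrt (sq_nonneg r)
  have hR0 : (0:ℝ) ≤ R := Real.sqrt_nonneg _
  have habsz : ‖z‖ = R := by
    rw [hRdef, ← habs2, Real.sqrt_sq (norm_nonneg z)]
  have hRg : R ≤ g := Real.sqrt_le_sqrt (by linarith)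
  set ρ : ℝ := ‖u‖ with hρdef
  have hρ0 : (0:ℝ) ≤ ρ := hρdef ▸ norm_nonneg u
  have hρval : ρ = R / s := by
    rw [hρdef, hudef, norm_div, Complex.norm_real, Real.norm_eq_abs, abs_of_pos hs0, habsz]
  set ec : ℂ := Complex.exp ((α : ℂ) * Complex.I) with hecdef
  have hec1 : ‖ec‖ = 1 := hecdef ▸ Complex.norm_exp_ofReal_mul_I α
  set La : ℂ := Complex.log (1 - u * ec) with hLadef
  set Lb : ℂ := Complex.log (1 - u) with hLbdef
  set M : ℂ := lam1 * (ec - 1) + lam2 with hMdef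
  set c : ℝ := ‖ec - 1‖ with hcdef
  set A : ℝ := ‖lam1 * (ec - 1)‖ with hAdef
  set B : ℝ := ‖lam2‖ with hBdef
  have hA0 : (0:ℝ) ≤ A := hAdef ▸ norm_nonneg _
  have hB0 : (0:ℝ) ≤ B := hBdef ▸ norm_nonneg _
  have hc0 : (0:ℝ) ≤ c := hcdef ▸ norm_nonneg _
  have hl10 : (0:ℝ) ≤ ‖lam1‖ := norm_nonneg _
  have hAc : A = ‖lam1‖ * c := by rw [hAdef, hcdef, norm_mul]
  have hM : ‖M‖ ≤ A + B := by
    rw [hMdef, hAdef, hBdef]; exact norm_add_le _ _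
  clear_value z s g u R ρ ec La Lb M c A B
  -- arithmetic facts about ρ
  have hρ2 : ρ ^ 2 * (r ^ 2 + Γ) = r ^ 2 := by
    rw [hρval, div_pow, hR2, hs2, div_mul_cancel₀ _ (by positivity : r ^ 2 + Γ ≠ 0)]
  have hρsq : ρ ^ 2 ≤ 1 / 2 := arithA hΓ hrΓ hρ2
  have hρ34 : ρ ≤ 3 / 4 := arithB hρ0 hρsq
  have hρ1 : ρ < 1 := by linarith
  -- E1 bound
  have hE1 : ‖(La + u * ec) - (Lb + u)‖ ≤ ρ / (1 - ρ) * (ρ * c) := by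
    have h := log_one_sub_lip hρ1 (a := u * ec) (b := u)
      (by rw [norm_mul, hec1, mul_one]; exact hρdef.ge) hρdef.ge
    have h2 : ‖u * ec - u‖ = ρ * c := by
      rw [show u * ec - u = u * (ec - 1) by ring, norm_mul, hρdef, hcdef]
    rw [hLadef, hLbdef, ← h2]
    exact h
  -- E2 bound
  have hE2 : ‖Lb + u‖ ≤ ρ / (1 - ρ) * ρ := by
    have h := log_one_sub_lip hρ1 (a := u) (b := 0) hρdef.ge
      (by simpa using hρ0)
    rw [hLbdef]
    simpa [Complex.log_one, ← hρdef] using h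
  -- term-3 distance bound
  have ht3 : ‖z * ((g⁻¹ : ℝ) : ℂ) - u‖ ≤ r ^ 2 / (2 * Γ) := by
    have hgne : ((g : ℝ) : ℂ) ≠ 0 := by
      simp only [ne_eq, Complex.ofReal_eq_zero]; linarith
    have hsne : ((s : ℝ) : ℂ) ≠ 0 := by
      simp only [ne_eq, Complex.ofReal_eq_zero]; linarith
    have hrw : z * ((g⁻¹ : ℝ) : ℂ) - u = z * (((g⁻¹ - s⁻¹ : ℝ)) : ℂ) := by
      rw [hudef, Complex.ofReal_sub, Complex.ofReal_inv, Complex.ofReal_inv, div_eq_mul_inv]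
      ring
    rw [hrw, norm_mul, Complex.norm_real, Real.norm_eq_abs, habsz]
    have hinv : g⁻¹ - s⁻¹ = (s - g) / (g * s) := by
      rw [inv_eq_one_div, inv_eq_one_div, div_sub_div _ _ hg0.ne' hs0.ne', one_mul, mul_one]
    have hsg : s - g = r ^ 2 / (s + g) := by
      rw [eq_div_iff (by positivity)]; linear_combination hs2 - hg2
    have hnn : (0:ℝ) ≤ g⁻¹ - s⁻¹ := by
      rw [hinv]
      have h1 : (0:ℝ) ≤ s - g := by linarith
      positivity
    rw [_root_.abs_of_nonneg hnn, hinv, hsg]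
    exact arithE hR0 hRg hgs hg0 hs0 hg2
  -- rewrite goal
  have hkey : (lam1 * La - lam1 * Lb + lam2 * Lb) + M * z * ((g⁻¹ : ℝ) : ℂ)
      = lam1 * ((La + u * ec) - (Lb + u)) + lam2 * (Lb + u)
        + M * (z * ((g⁻¹ : ℝ) : ℂ) - u) := by
    rw [hMdef]; ring
  have hgoal : Fcal lam1 lam2 α Γ z + (M * z).re * g⁻¹
      = (lam1 * ((La + u * ec) - (Lb + u)) + lam2 * (Lb + u)
          + M * (z * ((g⁻¹ : ℝ) : ℂ) - u)).re := by
    rw [← hkey, Fcal, hu, ← hecdef, ← hLadef, ← hLbdef]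
    simp only [Complex.add_re]
    congr 1
    rw [show M * z * ((g⁻¹ : ℝ) : ℂ) = ((g⁻¹ : ℝ) : ℂ) * (M * z) from mul_comm _ _,
      Complex.re_ofReal_mul, mul_comm]
  rw [hgoal]
  -- triangle inequality
  have htri : |(lam1 * ((La + u * ec) - (Lb + u)) + lam2 * (Lb + u)
        + M * (z * ((g⁻¹ : ℝ) : ℂ) - u)).re|
      ≤ ‖lam1‖ * ‖(La + u * ec) - (Lb + u)‖
        + B * ‖Lb + u‖
        + ‖M‖ * ‖z * ((g⁻¹ : ℝ) : ℂ) - u‖ := by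
    calc |(lam1 * ((La + u * ec) - (Lb + u)) + lam2 * (Lb + u)
          + M * (z * ((g⁻¹ : ℝ) : ℂ) - u)).re|
        ≤ ‖lam1 * ((La + u * ec) - (Lb + u)) + lam2 * (Lb + u)
          + M * (z * ((g⁻¹ : ℝ) : ℂ) - u)‖ := Complex.abs_re_le_norm _
      _ ≤ ‖lam1 * ((La + u * ec) - (Lb + u))‖ + ‖lam2 * (Lb + u)‖
          + ‖M * (z * ((g⁻¹ : ℝ) : ℂ) - u)‖ := by
          refine le_trans (norm_add_le _ _) ?_
          gcongr
          exact norm_add_le _ _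
      _ = _ := by rw [norm_mul, norm_mul, norm_mul, hBdef]
  refine le_trans htri ?_
  have hρρ : ρ / (1 - ρ) ≤ 4 * ρ := arithC hρ0 hρ34
  have hρ2Γ : ρ ^ 2 ≤ r ^ 2 / Γ := arithD hΓ0 hρ2
  have hr2Γ : (0:ℝ) ≤ r ^ 2 / Γ := by positivity
  have hT1 : ‖lam1‖ * ‖(La + u * ec) - (Lb + u)‖
      ≤ 4 * A * (r ^ 2 / Γ) := by
    calc ‖lam1‖ * ‖(La + u * ec) - (Lb + u)‖
        ≤ ‖lam1‖ * (ρ / (1 - ρ) * (ρ * c)) := by gcongr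
      _ ≤ ‖lam1‖ * (4 * ρ * (ρ * c)) := by
          gcongr
      _ = 4 * (‖lam1‖ * c) * ρ ^ 2 := by ring
      _ = 4 * A * ρ ^ 2 := by rw [← hAc]
      _ ≤ 4 * A * (r ^ 2 / Γ) := by gcongr
  have hT2 : B * ‖Lb + u‖ ≤ 4 * B * (r ^ 2 / Γ) := by
    calc B * ‖Lb + u‖ ≤ B * (ρ / (1 - ρ) * ρ) := by gcongr
      _ ≤ B * (4 * ρ * ρ) := by gcongr
      _ = 4 * B * ρ ^ 2 := by ring
      _ ≤ 4 * B * (r ^ 2 / Γ) := by gcongr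
  have hT3 : ‖M‖ * ‖z * ((g⁻¹ : ℝ) : ℂ) - u‖
      ≤ (A + B) * (r ^ 2 / (2 * Γ)) := by
    gcongr
  have hfin : 4 * A * (r ^ 2 / Γ) + 4 * B * (r ^ 2 / Γ) + (A + B) * (r ^ 2 / (2 * Γ))
      ≤ 10 * (A + B) * r ^ 2 / Γ := arithF hA0 hB0 hΓ0
  linarith
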